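/- Let γ be a probability measure on [0,1] with n-th moments c_n = ∫ r^n dγ(r), and fix q > 0. Then the following are equivalent: (1) the point 1 lies in the support of γ; (2) lim_{n→∞} c_n^{1/n} = 1; (3) lim_{n→∞} c_{q(n+1)}/c_{qn} = 1, where c_t = ∫ r^t dγ(r) for real t ≥ 0. -/

import Mathlib

open MeasureTheory Filter Topology Set

section aux

variable {γ : Measure ℝ} [IsProbabilityMeasure γ]

lemma ae_mem_Icc (hγ : γ (Set.Icc (0:ℝ) 1)ᶜ = 0) : ∀ᵐ r ∂γ, r ∈ Set.Icc (0:ℝ) 1 := by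
  have : Set.Icc (0:ℝ) 1 ∈ ae γ := mem_ae_iff.mpr hγ
  exact this

lemma integ (hγ : γ (Set.Icc (0:ℝ) 1)ᶜ = 0) {t : ℝ} (ht : 0 ≤ t) :
    Integrable (fun r : ℝ => r ^ t) γ := by
  refine (integrable_const (1:ℝ)).mono' ?_ ?_
  · exact (Real.continuous_rpow_const ht).measurable.aestronglyMeasurable
  · filter_upwards [ae_mem_Icc hγ] with r hr
    rw [Real.norm_eq_abs, abs_of_nonneg (Real.rpow_nonneg hr.1 t)]
    exact Real.rpow_le_one hr.1 hr.2 ht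

lemma I_nonneg (hγ : γ (Set.Icc (0:ℝ) 1)ᶜ = 0) (t : ℝ) : 0 ≤ ∫ r, r ^ t ∂γ := by
  refine integral_nonneg_of_ae ?_
  filter_upwards [ae_mem_Icc hγ] with r hr
  exact Real.rpow_nonneg hr.1 t

lemma I_le_one (hγ : γ (Set.Icc (0:ℝ) 1)ᶜ = 0) {t : ℝ} (ht : 0 ≤ t) :
    ∫ r, r ^ t ∂γ ≤ 1 := by
  calc ∫ r, r ^ t ∂γ ≤ ∫ _r, (1:ℝ) ∂γ := by
        refine integral_mono_ae (integ hγ ht) (integrable_const 1) ?_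
        filter_upwards [ae_mem_Icc hγ] with r hr
        exact Real.rpow_le_one hr.1 hr.2 ht
    _ = 1 := by simp

lemma I_anti (hγ : γ (Set.Icc (0:ℝ) 1)ᶜ = 0) {t t' : ℝ} (ht : 0 ≤ t) (htt : t ≤ t') :
    ∫ r, r ^ t' ∂γ ≤ ∫ r, r ^ t ∂γ := by
  refine integral_mono_ae (integ hγ (ht.trans htt)) (integ hγ ht) ?_
  filter_upwards [ae_mem_Icc hγ] with r hr
  rcases eq_or_lt_of_le hr.1 with h0 | h0
  · rcases eq_or_lt_of_le ht with h1 | h1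
    · rw [← h0, ← h1, Real.rpow_zero]
      exact Real.rpow_le_one le_rfl zero_le_one (by linarith)
    · rw [← h0, Real.zero_rpow h1.ne', Real.zero_rpow (by linarith : t' ≠ 0)]
  · exact Real.rpow_le_rpow_of_exponent_ge h0 hr.2 htt

lemma I_lower (hγ : γ (Set.Icc (0:ℝ) 1)ᶜ = 0) {β t : ℝ} (hβ0 : 0 ≤ β) (ht : 0 ≤ t) :
    β ^ t * (γ (Set.Ioc β 1)).toReal ≤ ∫ r, r ^ t ∂γ := by
  have h1 : β ^ t * (γ (Set.Ioc β 1)).toReal ≤ ∫ r in Set.Ioc β 1, r ^ t ∂γ := by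
    refine setIntegral_ge_of_const_le_real measurableSet_Ioc (measure_ne_top γ _) ?_
      ((integ hγ ht).integrableOn)
    intro r hr; exact Real.rpow_le_rpow hβ0 hr.1.le ht
  refine h1.trans (setIntegral_le_integral (integ hγ ht) ?_)
  filter_upwards [ae_mem_Icc hγ] with r hr
  exact Real.rpow_nonneg hr.1 t

lemma I_key (hγ : γ (Set.Icc (0:ℝ) 1)ᶜ = 0) {β t u : ℝ} (hβ0 : 0 ≤ β) (hβ1 : β ≤ 1)
    (ht : 0 ≤ t) (hu : 0 ≤ u) :
    β ^ u * ((∫ r, r ^ t ∂γ) - β ^ t) ≤ ∫ r, r ^ (t + u) ∂γ := by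
  set S := Set.Ioc β 1 with hSdef
  have hS : MeasurableSet S := measurableSet_Ioc
  have h1 : ∫ r in S, r ^ (t + u) ∂γ ≤ ∫ r, r ^ (t + u) ∂γ := by
    refine setIntegral_le_integral (integ hγ (by linarith)) ?_
    filter_upwards [ae_mem_Icc hγ] with r hr
    exact Real.rpow_nonneg hr.1 _
  have h2 : ∫ r in S, β ^ u * r ^ t ∂γ ≤ ∫ r in S, r ^ (t + u) ∂γ := by
    refine setIntegral_mono_on (((integ hγ ht).integrableOn).const_mul _)
      ((integ hγ (by linarith)).integrableOn) hS ?_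
    intro r hr
    have hr0 : 0 < r := lt_of_le_of_lt hβ0 hr.1
    rw [Real.rpow_add hr0, mul_comm (r ^ t)]
    exact mul_le_mul_of_nonneg_right (Real.rpow_le_rpow hβ0 hr.1.le hu)
      (Real.rpow_nonneg hr0.le t)
  have h3 : ∫ r in S, β ^ u * r ^ t ∂γ = β ^ u * ∫ r in S, r ^ t ∂γ :=
    integral_const_mul _ _
  have h4 : (∫ r, r ^ t ∂γ) - β ^ t ≤ ∫ r in S, r ^ t ∂γ := by
    have hsplit : (∫ r in S, r ^ t ∂γ) + ∫ r in Sᶜ, r ^ t ∂γ = ∫ r, r ^ t ∂γ :=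
      integral_add_compl hS (integ hγ ht)
    have hcompl : ∫ r in Sᶜ, r ^ t ∂γ ≤ β ^ t := by
      have hmono : ∫ r in Sᶜ, r ^ t ∂γ ≤ ∫ _r in Sᶜ, β ^ t ∂γ := by
        refine setIntegral_mono_ae_restrict ((integ hγ ht).integrableOn)
          (integrableOn_const (measure_ne_top _ _)) ?_
        refine (ae_restrict_iff' hS.compl).2 ?_
        filter_upwards [ae_mem_Icc hγ] with r hr hrS
        have hrβ : r ≤ β := by
          by_contra hcon
          exact hrS ⟨lt_of_not_ge hcon, hr.2⟩
        exact Real.rpow_le_rpow hr.1 hrβ ht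
      have hconst : ∫ _r in Sᶜ, (β ^ t : ℝ) ∂γ = (γ Sᶜ).toReal * β ^ t := by
        rw [setIntegral_const, smul_eq_mul]; rfl
      have hle1 : (γ Sᶜ).toReal ≤ 1 := by
        have h := ENNReal.toReal_mono (by simp) (prob_le_one (μ := γ) (s := Sᶜ))
        simpa using h
      have := mul_le_mul_of_nonneg_right hle1 (Real.rpow_nonneg hβ0 t)
      rw [one_mul] at this
      linarith [hmono, hconst ▸ this]
    linarith
  calc β ^ u * ((∫ r, r ^ t ∂γ) - β ^ t)
      ≤ β ^ u * ∫ r in S, r ^ t ∂γ :=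
        mul_le_mul_of_nonneg_left h4 (Real.rpow_nonneg hβ0 u)
    _ = ∫ r in S, β ^ u * r ^ t ∂γ := h3.symm
    _ ≤ ∫ r in S, r ^ (t + u) ∂γ := h2
    _ ≤ ∫ r, r ^ (t + u) ∂γ := h1

lemma ae_le_alpha (hγ : γ (Set.Icc (0:ℝ) 1)ᶜ = 0) {α : ℝ}
    (h0 : γ (Set.Ioc α 1) = 0) : ∀ᵐ r ∂γ, r ∈ Set.Icc (0:ℝ) 1 ∧ r ≤ α := by
  have h1 : ∀ᵐ r ∂γ, r ∉ Set.Ioc α 1 := measure_eq_zero_iff_ae_notMem.mp h0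
  filter_upwards [ae_mem_Icc hγ, h1] with r hr hr2
  refine ⟨hr, ?_⟩
  by_contra hcon
  exact hr2 ⟨lt_of_not_ge hcon, hr.2⟩

lemma I_upper_pow (hγ : γ (Set.Icc (0:ℝ) 1)ᶜ = 0) {α t : ℝ} (hα0 : 0 ≤ α)
    (h0 : γ (Set.Ioc α 1) = 0) (ht : 0 ≤ t) : ∫ r, r ^ t ∂γ ≤ α ^ t := by
  calc ∫ r, r ^ t ∂γ ≤ ∫ _r, (α ^ t : ℝ) ∂γ := by
        refine integral_mono_ae (integ hγ ht) (integrable_const _) ?_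
        filter_upwards [ae_le_alpha hγ h0] with r hr
        exact Real.rpow_le_rpow hr.1.1 hr.2 ht
    _ = α ^ t := by simp

lemma I_upper_ratio (hγ : γ (Set.Icc (0:ℝ) 1)ᶜ = 0) {α t u : ℝ} (hα0 : 0 ≤ α)
    (h0 : γ (Set.Ioc α 1) = 0) (ht : 0 ≤ t) (hu : 0 < u) :
    ∫ r, r ^ (t + u) ∂γ ≤ α ^ u * ∫ r, r ^ t ∂γ := by
  have h2 : ∫ r, α ^ u * r ^ t ∂γ = α ^ u * ∫ r, r ^ t ∂γ := integral_const_mul _ _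
  rw [← h2]
  refine integral_mono_ae (integ hγ (by linarith)) ((integ hγ ht).const_mul _) ?_
  filter_upwards [ae_le_alpha hγ h0] with r hr
  rcases eq_or_lt_of_le hr.1.1 with hr0 | hr0
  · rw [← hr0, Real.zero_rpow (by linarith : t + u ≠ 0)]
    exact mul_nonneg (Real.rpow_nonneg hα0 u) (Real.rpow_nonneg le_rfl t)
  · rw [Real.rpow_add hr0, mul_comm (r ^ t)]
    exact mul_le_mul_of_nonneg_right (Real.rpow_le_rpow hr0.le hr.2 hu.le)
      (Real.rpow_nonneg hr0.le t)

lemma tendsto_rpow_inv_nat {m : ℝ} (hm : 0 < m) :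
    Tendsto (fun n : ℕ => m ^ ((n : ℝ)⁻¹)) atTop (𝓝 1) := by
  have h1 : Tendsto (fun n : ℕ => ((n : ℝ))⁻¹) atTop (𝓝 0) :=
    tendsto_inv_atTop_zero.comp tendsto_natCast_atTop_atTop
  have h2 : Tendsto (fun n : ℕ => Real.exp (Real.log m * (n : ℝ)⁻¹)) atTop (𝓝 1) := by
    have h3 : Tendsto (fun n : ℕ => Real.log m * (n : ℝ)⁻¹) atTop (𝓝 0) := by
      simpa using h1.const_mul (Real.log m)
    simpa [Function.comp_def] using (Real.continuous_exp.tendsto 0).comp h3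
  refine h2.congr fun n => ?_
  rw [Real.rpow_def_of_pos hm]

end aux

theorem stmt0 (γ : Measure ℝ) [IsProbabilityMeasure γ]
    (hγ : γ (Set.Icc (0:ℝ) 1)ᶜ = 0) (q : ℝ) (hq : 0 < q)
    (c : ℝ → ℝ) (hc : ∀ t, c t = ∫ r, r ^ t ∂γ) :
    ((∀ ε > 0, 0 < γ (Set.Ioc (1 - ε) 1)) ↔
      Tendsto (fun n : ℕ => (c n) ^ ((n : ℝ)⁻¹)) atTop (nhds 1)) ∧
    ((∀ ε > 0, 0 < γ (Set.Ioc (1 - ε) 1)) ↔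
      Tendsto (fun n : ℕ => c (q * (n + 1)) / c (q * n)) atTop (nhds 1)) := by
  simp only [hc]
  -- positive mass near any β < 1, under the support hypothesis
  have hA_mass : (∀ ε > 0, 0 < γ (Set.Ioc (1 - ε) 1)) → ∀ β : ℝ, β < 1 →
      0 < (γ (Set.Ioc β 1)).toReal := by
    intro A β hβ
    have h := A (1 - β) (by linarith)
    rw [show (1:ℝ) - (1 - β) = β by ring] at h
    exact ENNReal.toReal_pos h.ne' (measure_ne_top _ _)
  constructor
  · constructor
    · -- (1) → (2)
      intro A
      refine tendsto_order.2 ⟨?_, ?_⟩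
      · intro a ha
        rcases lt_or_ge a 0 with ha0 | ha0
        · filter_upwards with n
          exact lt_of_lt_of_le ha0 (Real.rpow_nonneg (I_nonneg hγ _) _)
        · set b : ℝ := (1 + a) / 2 with hbdef
          have hb0 : 0 < b := by simp only [hbdef]; linarith
          have hb1 : b < 1 := by simp only [hbdef]; linarith
          have hab : a < b := by simp only [hbdef]; linarith
          have hm : 0 < (γ (Set.Ioc b 1)).toReal := hA_mass A b hb1
          have hvlim : Tendsto (fun n : ℕ => b * (γ (Set.Ioc b 1)).toReal ^ ((n:ℝ)⁻¹))
              atTop (𝓝 b) := by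
            simpa using (tendsto_rpow_inv_nat hm).const_mul b
          filter_upwards [hvlim.eventually (lt_mem_nhds hab), eventually_ge_atTop 1]
            with n h1 h2
          have hn0 : ((n:ℝ)) ≠ 0 := Nat.cast_ne_zero.2 (by omega)
          have hcn : b ^ (n:ℝ) * (γ (Set.Ioc b 1)).toReal ≤ ∫ r, r ^ (n:ℝ) ∂γ :=
            I_lower hγ hb0.le (by positivity)
          have h3 : (b ^ (n:ℝ) * (γ (Set.Ioc b 1)).toReal) ^ ((n:ℝ)⁻¹) ≤
              (∫ r, r ^ (n:ℝ) ∂γ) ^ ((n:ℝ)⁻¹) :=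
            Real.rpow_le_rpow (by positivity) hcn (by positivity)
          have heq : (b ^ (n:ℝ) * (γ (Set.Ioc b 1)).toReal) ^ ((n:ℝ)⁻¹) =
              b * (γ (Set.Ioc b 1)).toReal ^ ((n:ℝ)⁻¹) := by
            rw [Real.mul_rpow (Real.rpow_nonneg hb0.le _) hm.le,
              ← Real.rpow_mul hb0.le, mul_inv_cancel₀ hn0, Real.rpow_one]
          rw [heq] at h3
          linarith
      · intro a ha
        filter_upwards with n
        have h1 : (∫ r, r ^ (n:ℝ) ∂γ) ^ ((n:ℝ)⁻¹) ≤ 1 :=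
          Real.rpow_le_one (I_nonneg hγ _) (I_le_one hγ (by positivity)) (by positivity)
        linarith
    · -- (2) → (1)
      intro h
      by_contra hA
      push_neg at hA
      obtain ⟨ε, hε, h0⟩ := hA
      rw [nonpos_iff_eq_zero] at h0
      set α : ℝ := max (1 - ε) 0 with hαdef
      have hα0 : 0 ≤ α := le_max_right _ _
      have hα1 : α < 1 := max_lt (by linarith) one_pos
      have hnull : γ (Set.Ioc α 1) = 0 :=
        measure_mono_null (Set.Ioc_subset_Ioc_left (le_max_left _ _)) h0
      have hub : ∀ n : ℕ, 1 ≤ n → (∫ r, r ^ (n:ℝ) ∂γ) ^ ((n:ℝ)⁻¹) ≤ α := by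
        intro n hn
        have hn0 : ((n:ℝ)) ≠ 0 := Nat.cast_ne_zero.2 (by omega)
        have h1 : ∫ r, r ^ (n:ℝ) ∂γ ≤ α ^ (n:ℝ) := I_upper_pow hγ hα0 hnull (by positivity)
        have h2 : (∫ r, r ^ (n:ℝ) ∂γ) ^ ((n:ℝ)⁻¹) ≤ (α ^ (n:ℝ)) ^ ((n:ℝ)⁻¹) :=
          Real.rpow_le_rpow (I_nonneg hγ _) h1 (by positivity)
        rwa [← Real.rpow_mul hα0, mul_inv_cancel₀ hn0, Real.rpow_one] at h2
      obtain ⟨n, hn1, hn2⟩ := ((h.eventually (lt_mem_nhds hα1)).and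
        (eventually_ge_atTop 1)).exists
      exact absurd (hub n hn2) (not_le.2 hn1)
  · constructor
    · -- (1) → (3)
      intro A
      have hpos : ∀ t : ℝ, 0 ≤ t → 0 < ∫ r, r ^ t ∂γ := by
        intro t ht
        have hm : 0 < (γ (Set.Ioc (1/2 : ℝ) 1)).toReal := hA_mass A _ (by norm_num)
        have hl := I_lower hγ (by norm_num : (0:ℝ) ≤ 1/2) ht
        have h2 : 0 < ((1:ℝ)/2) ^ t := Real.rpow_pos_of_pos (by norm_num) t
        nlinarith
      refine tendsto_order.2 ⟨?_, ?_⟩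
      · intro a ha
        rcases lt_or_ge a 0 with ha0 | ha0
        · filter_upwards with n
          have := hpos (q * ((n:ℝ) + 1)) (by positivity)
          exact lt_of_lt_of_le ha0 (div_nonneg this.le (hpos (q * n) (by positivity)).le)
        · -- main estimate
          set δ : ℝ := a ^ q⁻¹ with hδdef
          have hδ0 : 0 ≤ δ := Real.rpow_nonneg ha0 _
          have hδ1 : δ < 1 := Real.rpow_lt_one ha0 ha (by positivity)
          set β₁ : ℝ := (1 + δ) / 2 with hβ₁def
          set β₂ : ℝ := (1 + β₁) / 2 with hβ₂def
          have hβ₁0 : 0 < β₁ := by simp only [hβ₁def]; linarith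
          have hβ₁1 : β₁ < 1 := by simp only [hβ₁def]; linarith
          have hδβ : δ < β₁ := by simp only [hβ₁def]; linarith
          have hβ₁₂ : β₁ < β₂ := by simp only [hβ₂def]; linarith
          have hβ₂1 : β₂ < 1 := by simp only [hβ₂def]; linarith
          have hβ₂0 : 0 < β₂ := lt_trans hβ₁0 hβ₁₂
          have haq : a < β₁ ^ q := by
            rcases eq_or_lt_of_le ha0 with h | h
            · rw [← h]; exact Real.rpow_pos_of_pos hβ₁0 q
            · calc a = a ^ (1:ℝ) := (Real.rpow_one a).symm
                _ = a ^ (q⁻¹ * q) := by rw [inv_mul_cancel₀ hq.ne']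
                _ = (a ^ q⁻¹) ^ q := Real.rpow_mul ha0 _ _
                _ < β₁ ^ q := Real.rpow_lt_rpow hδ0 hδβ hq
          set m₂ : ℝ := (γ (Set.Ioc β₂ 1)).toReal with hm₂def
          have hm₂ : 0 < m₂ := hA_mass A _ hβ₂1
          set ρ : ℝ := β₁ / β₂ with hρdef
          have hρ0 : 0 ≤ ρ := by positivity
          have hρ1 : ρ < 1 := (div_lt_one hβ₂0).2 hβ₁₂
          have hgeom : Tendsto (fun n : ℕ => (ρ ^ q) ^ n) atTop (𝓝 0) :=
            tendsto_pow_atTop_nhds_zero_of_lt_one (Real.rpow_nonneg hρ0 q)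
              (Real.rpow_lt_one hρ0 hρ1 hq)
          have hb1q : 0 < β₁ ^ q := Real.rpow_pos_of_pos hβ₁0 q
          set K : ℝ := (β₁ ^ q - a) * m₂ / β₁ ^ q with hKdef
          have hK : 0 < K := div_pos (mul_pos (sub_pos.2 haq) hm₂) hb1q
          filter_upwards [hgeom.eventually (gt_mem_nhds hK)] with n hn
          have hqn : (0:ℝ) ≤ q * n := by positivity
          rw [show q * ((n:ℝ) + 1) = q * n + q by ring]
          rw [lt_div_iff₀ (hpos _ hqn)]
          have hkey := I_key hγ hβ₁0.le hβ₁1.le hqn hq.le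
          have hlow := I_lower hγ hβ₂0.le hqn
          have hsplit : β₁ ^ (q * (n:ℝ)) = (ρ ^ q) ^ n * β₂ ^ (q * (n:ℝ)) := by
            have h1 : (ρ ^ q) ^ n = ρ ^ (q * (n:ℝ)) := by
              rw [← Real.rpow_natCast (ρ ^ q) n]
              exact (Real.rpow_mul hρ0 q (n:ℝ)).symm
            rw [h1, hρdef, Real.div_rpow hβ₁0.le hβ₂0.le,
              div_mul_cancel₀ _ (Real.rpow_pos_of_pos hβ₂0 _).ne']
          have hb2 : 0 < β₂ ^ (q * (n:ℝ)) := Real.rpow_pos_of_pos hβ₂0 _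
          have hKmul : (ρ ^ q) ^ n * β₁ ^ q < (β₁ ^ q - a) * m₂ := by
            have h := mul_lt_mul_of_pos_right hn hb1q
            rwa [hKdef, div_mul_cancel₀ _ hb1q.ne'] at h
          rw [hsplit] at hkey
          have h1 := mul_lt_mul_of_pos_right hKmul hb2
          have h2 := mul_le_mul_of_nonneg_left hlow (sub_nonneg.2 haq.le)
          nlinarith [hkey, h1, h2]
      · intro b hb
        filter_upwards with n
        have hqn : (0:ℝ) ≤ q * n := by positivity
        have h1 : ∫ r, r ^ (q * ((n:ℝ) + 1)) ∂γ ≤ ∫ r, r ^ (q * (n:ℝ)) ∂γ :=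
          I_anti hγ hqn (by nlinarith)
        have h2 : 0 < ∫ r, r ^ (q * (n:ℝ)) ∂γ := hpos _ hqn
        have : (∫ r, r ^ (q * ((n:ℝ) + 1)) ∂γ) / ∫ r, r ^ (q * (n:ℝ)) ∂γ ≤ 1 :=
          (div_le_one h2).2 h1
        linarith
    · -- (3) → (1)
      intro h
      by_contra hA
      push_neg at hA
      obtain ⟨ε, hε, h0⟩ := hA
      rw [nonpos_iff_eq_zero] at h0
      set α : ℝ := max (1 - ε) 0 with hαdef
      have hα0 : 0 ≤ α := le_max_right _ _
      have hα1 : α < 1 := max_lt (by linarith) one_pos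
      have hnull : γ (Set.Ioc α 1) = 0 :=
        measure_mono_null (Set.Ioc_subset_Ioc_left (le_max_left _ _)) h0
      have hub : ∀ n : ℕ,
          (∫ r, r ^ (q * ((n:ℝ) + 1)) ∂γ) / (∫ r, r ^ (q * (n:ℝ)) ∂γ) ≤ α ^ q := by
        intro n
        have hqn : (0:ℝ) ≤ q * n := by positivity
        rcases eq_or_lt_of_le (I_nonneg hγ (q * (n:ℝ))) with hz | hz
        · rw [← hz, div_zero]
          exact Real.rpow_nonneg hα0 q
        · rw [div_le_iff₀ hz, show q * ((n:ℝ) + 1) = q * n + q by ring]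
          exact I_upper_ratio hγ hα0 hnull hqn hq
      obtain ⟨n, hn⟩ := (h.eventually (lt_mem_nhds
        (Real.rpow_lt_one hα0 hα1 hq))).exists
      exact absurd (hub n) (not_le.2 hn)
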